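/- Given two sequences of real numbers (κ_k)_{k∈ℤ} and (κ̄_k)_{k∈ℤ} with κ_k ≠ 0 and κ̄_k ≠ 0 for all k, there exists a nondegenerate discrete planar curve r : ℤ → ℝ² whose first and second centroaffine curvatures at k are κ_k and κ̄_k for every k ∈ ℤ. -/

import Mathlib

/-- Planar determinant of two vectors in ℝ². -/
def det2 (u v : Fin 2 → ℝ) : ℝ := u 0 * v 1 - u 1 * v 0

/-- Edge tangent vector of a discrete planar curve. -/
def tang2 (r : ℤ → Fin 2 → ℝ) (k : ℤ) : Fin 2 → ℝ := r (k + 1) - r k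

/-- Nondegeneracy of a discrete planar curve. -/
def Nondeg2 (r : ℤ → Fin 2 → ℝ) : Prop :=
  ∀ k : ℤ, det2 (tang2 r (k - 1)) (tang2 r k) ≠ 0

/-- First centroaffine curvature. -/
noncomputable def kappa2 (r : ℤ → Fin 2 → ℝ) (k : ℤ) : ℝ :=
  det2 (tang2 r k) (tang2 r (k + 1)) / det2 (tang2 r (k - 1)) (tang2 r k)

/-- Second centroaffine curvature. -/
noncomputable def kbar2 (r : ℤ → Fin 2 → ℝ) (k : ℤ) : ℝ :=
  det2 (tang2 r (k - 1)) (tang2 r (k + 1)) / det2 (tang2 r (k - 1)) (tang2 r k)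

noncomputable section CAaux

/-- forward pairs: posT n = (t_{n-1}, t_n) -/
def posT (κ κbar : ℤ → ℝ) : ℕ → (Fin 2 → ℝ) × (Fin 2 → ℝ)
  | 0 => (![1,0], ![0,1])
  | n+1 => ((posT κ κbar n).2,
      κbar (n : ℤ) • (posT κ κbar n).2 - κ (n : ℤ) • (posT κ κbar n).1)

/-- backward pairs: negT n = (t_{-n-1}, t_{-n}) -/
def negT (κ κbar : ℤ → ℝ) : ℕ → (Fin 2 → ℝ) × (Fin 2 → ℝ)
  | 0 => (![1,0], ![0,1])
  | n+1 => ((κ (-(n:ℤ)-1))⁻¹ •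
      (κbar (-(n:ℤ)-1) • (negT κ κbar n).1 - (negT κ κbar n).2),
      (negT κ κbar n).1)

def tSeq (κ κbar : ℤ → ℝ) (k : ℤ) : Fin 2 → ℝ :=
  if 0 ≤ k then (posT κ κbar k.toNat).2 else (negT κ κbar (-k).toNat).2

variable (κ κbar : ℤ → ℝ)

lemma tSeq_nonneg (n : ℕ) : tSeq κ κbar (n : ℤ) = (posT κ κbar n).2 := by
  simp [tSeq]

lemma tSeq_neg (n : ℕ) : tSeq κ κbar (-(n : ℤ)) = (negT κ κbar n).2 := by
  rcases n with _ | m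
  · simp [tSeq, negT, posT]
  · have h : ¬ (0 ≤ -((m+1 : ℕ) : ℤ)) := by omega
    simp only [tSeq, h, if_false, neg_neg, Int.toNat_natCast]

lemma tSeq_rec (hκ : ∀ k, κ k ≠ 0) (k : ℤ) :
    tSeq κ κbar (k + 1) = κbar k • tSeq κ κbar k - κ k • tSeq κ κbar (k - 1) := by
  rcases k with n | n
  · -- k = n ≥ 0
    rcases n with _ | m
    · -- k = 0
      have h1 : tSeq κ κbar (0 + 1) = (posT κ κbar 1).2 := by
        simpa using tSeq_nonneg κ κbar 1
      have h0 : tSeq κ κbar 0 = (posT κ κbar 0).2 := by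
        simpa using tSeq_nonneg κ κbar 0
      have hm : tSeq κ κbar ((0:ℤ) - 1) = (negT κ κbar 1).2 := by
        simpa using tSeq_neg κ κbar 1
      show tSeq κ κbar (0 + 1) = κbar 0 • tSeq κ κbar 0 - κ 0 • tSeq κ κbar (0 - 1)
      rw [h1, h0, hm]
      simp [posT, negT]
    · -- k = m+1
      have e1 : (Int.ofNat (m+1)) + 1 = ((m+2 : ℕ) : ℤ) := by simp; ring
      have e0 : (Int.ofNat (m+1)) = ((m+1 : ℕ) : ℤ) := by simp
      have em : (Int.ofNat (m+1)) - 1 = ((m : ℕ) : ℤ) := by simp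
      rw [e1, tSeq_nonneg]
      rw [show (Int.ofNat (m+1)) - 1 = ((m : ℕ) : ℤ) from em, tSeq_nonneg]
      rw [e0, tSeq_nonneg]
      show (posT κ κbar (m+2)).2 = _
      have hp : (posT κ κbar (m+1)).1 = (posT κ κbar m).2 := by
        rcases m with _ | m' <;> simp [posT]
      simp only [posT, hp]
  · -- k = -(n+1)
    have e1 : (Int.negSucc n) + 1 = -((n : ℕ) : ℤ) := by rw [Int.negSucc_eq]; ring
    have e0 : (Int.negSucc n) = -((n+1 : ℕ) : ℤ) := by rw [Int.negSucc_eq]; push_cast; ring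
    have em : (Int.negSucc n) - 1 = -((n+2 : ℕ) : ℤ) := by rw [Int.negSucc_eq]; push_cast; ring
    rw [e1, em, e0, tSeq_neg, tSeq_neg, tSeq_neg]
    have hn1 : (negT κ κbar (n+1)).2 = (negT κ κbar n).1 := by simp [negT]
    have hn2 : (negT κ κbar (n+2)).2 = (negT κ κbar (n+1)).1 := by simp [negT]
    rw [hn1, hn2]
    have hcast : -((n+1:ℕ):ℤ) = -(n:ℤ) - 1 := by omega
    rw [hcast]
    show (negT κ κbar n).2 = κbar (-(n:ℤ)-1) • (negT κ κbar n).1 -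
        κ (-(n:ℤ)-1) • ((κ (-(n:ℤ)-1))⁻¹ •
          (κbar (-(n:ℤ)-1) • (negT κ κbar n).1 - (negT κ κbar n).2))
    rw [smul_inv_smul₀ (hκ _)]
    abel

lemma detS (hκ : ∀ k, κ k ≠ 0) (k : ℤ) :
    det2 (tSeq κ κbar k) (tSeq κ κbar (k+1)) = κ k * det2 (tSeq κ κbar (k-1)) (tSeq κ κbar k) := by
  rw [tSeq_rec κ κbar hκ k]
  simp only [det2, Pi.sub_apply, Pi.smul_apply, smul_eq_mul]
  ring

lemma detS2 (hκ : ∀ k, κ k ≠ 0) (k : ℤ) :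
    det2 (tSeq κ κbar (k-1)) (tSeq κ κbar (k+1)) = κbar k * det2 (tSeq κ κbar (k-1)) (tSeq κ κbar k) := by
  rw [tSeq_rec κ κbar hκ k]
  simp only [det2, Pi.sub_apply, Pi.smul_apply, smul_eq_mul]
  ring

lemma detNe (hκ : ∀ k, κ k ≠ 0) : ∀ k : ℤ, det2 (tSeq κ κbar (k-1)) (tSeq κ κbar k) ≠ 0 := by
  intro k
  induction k using Int.induction_on with
  | zero =>
    have h0 : tSeq κ κbar 0 = ![0,1] := by simpa [posT] using tSeq_nonneg κ κbar 0
    have hm : tSeq κ κbar ((0:ℤ)-1) = ![1,0] := by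
      have := tSeq_neg κ κbar 1
      simp only [negT] at this
      simpa using this
    rw [h0, hm]
    norm_num [det2]
  | succ n ih =>
    have h := detS κ κbar hκ n
    have e : ((n:ℤ)+1) - 1 = (n:ℤ) := by ring
    rw [e, h]
    exact mul_ne_zero (hκ _) ih
  | pred n ih =>
    have h := detS κ κbar hκ (-(n:ℤ)-1)
    have e1 : (-(n:ℤ)-1) + 1 = -(n:ℤ) := by ring
    rw [e1] at h
    intro hz
    have e2 : (-(n:ℤ)-1) - 1 = -(n:ℤ)-1-1 := rfl
    rw [hz] at h
    simp at h
    exact ih h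

/-- forward positions -/
def rP (κ κbar : ℤ → ℝ) : ℕ → Fin 2 → ℝ
  | 0 => 0
  | n+1 => rP κ κbar n + tSeq κ κbar (n : ℤ)

/-- backward positions: rN n = r (-n) -/
def rN (κ κbar : ℤ → ℝ) : ℕ → Fin 2 → ℝ
  | 0 => 0
  | n+1 => rN κ κbar n - tSeq κ κbar (-(n:ℤ)-1)

def rSeq (κ κbar : ℤ → ℝ) (k : ℤ) : Fin 2 → ℝ :=
  if 0 ≤ k then rP κ κbar k.toNat else rN κ κbar (-k).toNat

lemma tang_eq (k : ℤ) : tang2 (rSeq κ κbar) k = tSeq κ κbar k := by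
  rcases k with n | n
  · have h1 : rSeq κ κbar ((Int.ofNat n) + 1) = rP κ κbar (n+1) := by
      have : (0:ℤ) ≤ (Int.ofNat n) + 1 :=
        add_nonneg (Int.ofNat_nonneg n) zero_le_one
      simp [rSeq, this]
      congr 1
      omega
    have h0 : rSeq κ κbar (Int.ofNat n) = rP κ κbar n := by
      simp [rSeq]
    rw [tang2, h1, h0]
    simp [rP]
  · have h1 : rSeq κ κbar ((Int.negSucc n) + 1) = rN κ κbar n := by
      rcases n with _ | m
      · show rSeq κ κbar 0 = rN κ κbar 0
        simp [rSeq, rP, rN]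
      · have he : (Int.negSucc (m+1)) + 1 = -((m+1 : ℕ):ℤ) := by
          simp [Int.negSucc_eq]
        have hneg : ¬ (0:ℤ) ≤ -((m+1:ℕ):ℤ) := by omega
        rw [he]
        simp only [rSeq, hneg, if_false, neg_neg, Int.toNat_natCast]
    have h0 : rSeq κ κbar (Int.negSucc n) = rN κ κbar (n+1) := by
      have he : (Int.negSucc n) = -((n+1 : ℕ):ℤ) := by simp [Int.negSucc_eq]
      have hneg : ¬ (0:ℤ) ≤ -((n+1:ℕ):ℤ) := by omega
      rw [he]
      simp only [rSeq, hneg, if_false, neg_neg, Int.toNat_natCast]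
    rw [tang2, h1, h0]
    have : (Int.negSucc n) = -(n:ℤ)-1 := by rw [Int.negSucc_eq]; ring
    rw [this]
    simp [rN]

end CAaux

/-- Existence of a discrete planar curve with prescribed nonzero centroaffine curvatures. -/
theorem stmt_2 (κ κbar : ℤ → ℝ) (hκ : ∀ k, κ k ≠ 0) (hκbar : ∀ k, κbar k ≠ 0) :
    ∃ r : ℤ → Fin 2 → ℝ, Nondeg2 r ∧
      ∀ k : ℤ, kappa2 r k = κ k ∧ kbar2 r k = κbar k := by
  refine ⟨rSeq κ κbar, ?_, ?_⟩
  · intro k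
    rw [tang_eq, tang_eq]
    exact detNe κ κbar hκ k
  · intro k
    have hD := detNe κ κbar hκ k
    constructor
    · rw [kappa2, tang_eq, tang_eq, tang_eq, detS κ κbar hκ k,
        mul_div_assoc, div_self hD, mul_one]
    · rw [kbar2, tang_eq, tang_eq, tang_eq, detS2 κ κbar hκ k,
        mul_div_assoc, div_self hD, mul_one]
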